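/- For every integer r ≥ 5, the graph F_{2r} has 3r + 3 vertices and has no perfect matching, and every maximum matching M of F_{2r} saturates the three vertices x, y and z and leaves exactly r − 3 vertices unsaturated. -/

import Mathlib

/-- A matching `M` of `G` is maximum if no matching of `G` has more edges. -/
def SimpleGraph.IsMaximumMatching {α : Type*} (G : SimpleGraph α) (M : G.Subgraph) : Prop :=
  M.IsMatching ∧ ∀ M' : G.Subgraph, M'.IsMatching → M'.edgeSet.ncard ≤ M.edgeSet.ncard

/-- The (underlying simple) graph `F_n` of the paper (used with `n = r`):
the vertices `x, y, z` are encoded as `Sum.inl 0, Sum.inl 1, Sum.inl 2`, the vertex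
`v_{k+1}^{(i)}` is encoded as `Sum.inr (k, i)`; `x` is joined to every `v_1^{(i)}` and
`v_2^{(i)}`, `y` to every `v_1^{(i)}` and `v_3^{(i)}`, `z` to every `v_2^{(i)}` and
`v_3^{(i)}` (i.e. `Sum.inl k` is joined to `Sum.inr (k', i)` iff `k + k' ≠ 2`), and
for each `i` the vertices `v_1^{(i)}, v_2^{(i)}, v_3^{(i)}` form a triangle. -/
def FGraph (n : ℕ) : SimpleGraph (Fin 3 ⊕ Fin 3 × Fin n) where
  Adj a b :=
    match a, b with
    | .inl k, .inr p => (k : ℕ) + (p.1 : ℕ) ≠ 2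
    | .inr p, .inl k => (k : ℕ) + (p.1 : ℕ) ≠ 2
    | .inr p, .inr q => p.2 = q.2 ∧ p.1 ≠ q.1
    | _, _ => False
  symm := by
    constructor
    rintro (k | p) (k' | q) h
    · exact h
    · exact h
    · exact h
    · exact ⟨h.1.symm, h.2.symm⟩
  loopless := by
    constructor
    rintro (k | p) h
    · exact h
    · exact h.2 rfl

open Set

lemma matching_verts_ncard {V : Type*} [Fintype V] {G : SimpleGraph V} {M : G.Subgraph}
    (h : M.IsMatching) : M.verts.ncard = 2 * M.edgeSet.ncard := by
  classical
  haveI : Fintype M.verts := (Set.toFinite _).fintype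
  have hdeg : ∀ v : M.verts, M.coe.degree v = 1 := by
    intro v
    rw [SimpleGraph.Subgraph.coe_degree, SimpleGraph.Subgraph.degree_eq_one_iff_existsUnique_adj]
    exact h v.2
  have hsum : Fintype.card M.verts = 2 * M.coe.edgeFinset.card := by
    rw [← M.coe.sum_degrees_eq_twice_card_edges, ← Finset.card_univ,
      Finset.card_eq_sum_ones]
    apply Finset.sum_congr rfl
    intro v _
    convert (hdeg v).symm using 2
  have h1 : M.verts.ncard = Fintype.card M.verts := by
    rw [Set.ncard_eq_toFinset_card', Set.toFinset_card]
  have h2 : M.coe.edgeFinset.card = M.edgeSet.ncard := by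
    rw [← SimpleGraph.Subgraph.image_coe_edgeSet_coe,
      Set.ncard_image_of_injective _ (Sym2.map.injective Subtype.coe_injective),
      Set.ncard_eq_toFinset_card']
    rw [show M.coe.edgeFinset = M.coe.edgeSet.toFinset by ext e; simp]
  rw [h1, hsum, h2]

abbrev VV (r : ℕ) := Fin 3 ⊕ Fin 3 × Fin r

def cls {r : ℕ} : Sym2 (VV r) → Fin 3 ⊕ Fin r :=
  Sym2.lift ⟨fun a b => match a, b with
    | .inl k, .inl k' => .inl (min k k')
    | .inl k, .inr _ => .inl k
    | .inr _, .inl k => .inl k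
    | .inr p, .inr q => .inr (min p.2 q.2),
    by rintro (k | p) (k' | q) <;> simp [min_comm]⟩

lemma cls_mk {r : ℕ} (a b : VV r) : cls s(a, b) = (match a, b with
    | .inl k, .inl k' => .inl (min k k')
    | .inl k, .inr _ => .inl k
    | .inr _, .inl k => .inl k
    | .inr p, .inr q => .inr (min p.2 q.2)) := rfl

lemma cls_eq_inl {r : ℕ} {a b : VV r} (hab : (FGraph r).Adj a b) (k : Fin 3)
    (h : cls s(a, b) = .inl k) : a = .inl k ∨ b = .inl k := by
  rcases a with k1 | p <;> rcases b with k2 | q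
  · exact absurd hab (by simp [FGraph])
  · rw [cls_mk] at h; left; rw [Sum.inl.injEq] at h ⊢; exact h
  · rw [cls_mk] at h; right; rw [Sum.inl.injEq] at h ⊢; exact h
  · rw [cls_mk] at h; exact absurd h (by simp)

lemma cls_eq_inr {r : ℕ} {a b : VV r} (hab : (FGraph r).Adj a b) (i : Fin r)
    (h : cls s(a, b) = .inr i) :
    ∃ p q : Fin 3, p ≠ q ∧ a = .inr (p, i) ∧ b = .inr (q, i) := by
  rcases a with k1 | p <;> rcases b with k2 | q
  · exact absurd hab (by simp [FGraph])
  · rw [cls_mk] at h; exact absurd h (by simp)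
  · rw [cls_mk] at h; exact absurd h (by simp)
  · rw [cls_mk] at h
    have hadj : p.2 = q.2 ∧ p.1 ≠ q.1 := hab
    rw [Sum.inr.injEq] at h
    rw [hadj.1, min_self] at h
    exact ⟨p.1, q.1, hadj.2, by rw [← h, ← hadj.1], by rw [← h]⟩

lemma key3 : ∀ a1 b1 a2 b2 : Fin 3, a1 ≠ b1 → a2 ≠ b2 →
    a1 = a2 ∨ a1 = b2 ∨ b1 = a2 ∨ b1 = b2 := by decide

lemma cls_injOn {r : ℕ} {M : (FGraph r).Subgraph} (hM : M.IsMatching) :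
    Set.InjOn cls M.edgeSet := by
  have huniq : ∀ {v w w' : VV r}, M.Adj v w → M.Adj v w' → w = w' :=
    fun h1 h2 => ((hM (M.edge_vert h1)).unique h1 h2)
  intro e1 he1 e2 he2 hcls
  induction e1 with
  | _ a b =>
  induction e2 with
  | _ c d =>
  have hab : M.Adj a b := he1
  have hcd : M.Adj c d := he2
  rcases hc : cls s(a, b) with k | i
  · have h1 := cls_eq_inl (M.adj_sub hab) k hc
    have h2 := cls_eq_inl (M.adj_sub hcd) k (hcls ▸ hc)
    rcases h1 with rfl | rfl <;> rcases h2 with rfl | rfl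
    · rw [huniq hab hcd]
    · rw [Sym2.eq_swap (a := c)]; rw [huniq hab (M.adj_symm hcd)]
    · rw [Sym2.eq_swap (a := a)]; rw [huniq (M.adj_symm hab) hcd]
    · rw [Sym2.eq_swap (a := a), Sym2.eq_swap (a := c)]
      rw [huniq (M.adj_symm hab) (M.adj_symm hcd)]
  · obtain ⟨p1, q1, hne1, rfl, rfl⟩ := cls_eq_inr (M.adj_sub hab) i hc
    obtain ⟨p2, q2, hne2, rfl, rfl⟩ := cls_eq_inr (M.adj_sub hcd) i (hcls ▸ hc)
    rw [Sym2.eq_iff]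
    rcases key3 p1 q1 p2 q2 hne1 hne2 with h | h | h | h
    · have hq : (Sum.inr (q1, i) : VV r) = Sum.inr (q2, i) := huniq (h ▸ hab) hcd
      exact Or.inl ⟨by rw [h], hq⟩
    · have hq : (Sum.inr (q1, i) : VV r) = Sum.inr (p2, i) := huniq (h ▸ hab) (M.adj_symm hcd)
      exact Or.inr ⟨by rw [h], hq⟩
    · have hp : (Sum.inr (p1, i) : VV r) = Sum.inr (q2, i) := huniq (h ▸ (M.adj_symm hab)) hcd
      exact Or.inr ⟨hp, by rw [h]⟩
    · have hp : (Sum.inr (p1, i) : VV r) = Sum.inr (p2, i) :=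
        huniq (h ▸ (M.adj_symm hab)) (M.adj_symm hcd)
      exact Or.inl ⟨hp, by rw [h]⟩

lemma card_VV (r : ℕ) : Nat.card (VV r) = 3 * r + 3 := by
  simp [Nat.card_eq_fintype_card]
  ring

lemma edge_bound {r : ℕ} {M : (FGraph r).Subgraph} (hM : M.IsMatching) :
    M.edgeSet.ncard ≤ r + 3 := by
  have h1 : M.edgeSet.ncard = (cls '' M.edgeSet).ncard :=
    (Set.ncard_image_of_injOn (cls_injOn hM)).symm
  have h2 : (cls '' M.edgeSet).ncard ≤ (univ : Set (Fin 3 ⊕ Fin r)).ncard :=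
    Set.ncard_le_ncard (subset_univ _) finite_univ
  rw [Set.ncard_univ] at h2
  simp [Nat.card_eq_fintype_card] at h2
  omega

lemma edge_bound_unsat {r : ℕ} {M : (FGraph r).Subgraph} (hM : M.IsMatching) (k : Fin 3)
    (hun : ∀ b, ¬ M.Adj (.inl k) b) : M.edgeSet.ncard ≤ r + 2 := by
  have hsub : cls '' M.edgeSet ⊆ (univ : Set (Fin 3 ⊕ Fin r)) \ {.inl k} := by
    rintro c ⟨e, he, rfl⟩
    refine ⟨trivial, ?_⟩
    induction e with
    | _ a b =>
    intro hc
    rcases cls_eq_inl (M.adj_sub he) k hc with rfl | rfl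
    · exact hun b he
    · exact hun a (M.adj_symm he)
  have h1 : M.edgeSet.ncard = (cls '' M.edgeSet).ncard :=
    (Set.ncard_image_of_injOn (cls_injOn hM)).symm
  have h2 := Set.ncard_le_ncard hsub (Set.finite_univ.diff)
  have h3 : ((univ : Set (Fin 3 ⊕ Fin r)) \ {.inl k}).ncard
      = (univ : Set (Fin 3 ⊕ Fin r)).ncard - ({.inl k} : Set (Fin 3 ⊕ Fin r)).ncard :=
    Set.ncard_diff (by simp) (Set.toFinite _)
  rw [Set.ncard_univ, Set.ncard_singleton] at h3
  simp only [Nat.card_eq_fintype_card, Fintype.card_sum, Fintype.card_fin] at h3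
  omega

def ck (k : Fin 3) : Fin 3 := if (k : ℕ) = 2 then 1 else 0

def other3 (a b : Fin 3) : Fin 3 := ⟨(6 - (a : ℕ) - (b : ℕ)) % 3, Nat.mod_lt _ (by omega)⟩

lemma other3_spec : ∀ a b : Fin 3, a ≠ b →
    other3 a b ≠ a ∧ other3 a b ≠ b ∧ other3 a (other3 a b) = b := by decide

lemma ck_adj : ∀ k : Fin 3, (k : ℕ) + (ck k : ℕ) ≠ 2 := by decide

def satp {r : ℕ} : VV r → Prop
  | .inl _ => True
  | .inr (t, i) => (t : ℕ) ≠ 2 ∨ (i : ℕ) < 3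

def fpart {r : ℕ} (hr : 5 ≤ r) : VV r → VV r
  | .inl k => .inr (ck k, ⟨(k : ℕ), by omega⟩)
  | .inr (t, i) =>
    if h : (i : ℕ) < 3 then
      if t = ck ⟨(i : ℕ), h⟩ then .inl ⟨(i : ℕ), h⟩
      else .inr (other3 (ck ⟨(i : ℕ), h⟩) t, i)
    else if t = 0 then .inr (1, i) else .inr (0, i)

lemma fpart_spec {r : ℕ} (hr : 5 ≤ r) (a : VV r) (ha : satp a) :
    satp (fpart hr a) ∧ fpart hr (fpart hr a) = a ∧ (FGraph r).Adj a (fpart hr a) := by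
  rcases a with k | ⟨t, i⟩
  · refine ⟨?_, ?_, ?_⟩
    · show (ck k : ℕ) ≠ 2 ∨ _
      right
      show (k : ℕ) < 3
      omega
    · show fpart hr (.inr (ck k, ⟨(k : ℕ), by omega⟩)) = _
      rw [fpart]
      rw [dif_pos (show ((⟨(k : ℕ), by omega⟩ : Fin r) : ℕ) < 3 from k.2)]
      rw [if_pos (by congr 1 <;> simp)]
    · exact ck_adj k
  · rcases Nat.lt_or_ge (i : ℕ) 3 with h | h
    · by_cases ht : t = ck ⟨(i : ℕ), h⟩
      · rw [fpart, dif_pos h, if_pos ht]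
        refine ⟨trivial, ?_, ?_⟩
        · rw [fpart, ← ht]
        · show ((⟨(i : ℕ), h⟩ : Fin 3) : ℕ) + (t : ℕ) ≠ 2
          rw [ht]
          exact ck_adj _
      · rw [fpart, dif_pos h, if_neg ht]
        obtain ⟨hne1, hne2, hinv⟩ := other3_spec _ _ (Ne.symm ht)
        refine ⟨Or.inr h, ?_, rfl, Ne.symm hne2⟩
        rw [fpart, dif_pos h, if_neg hne1, hinv]
    · have ht2 : (t : ℕ) ≠ 2 := ha.resolve_right (by omega)
      rw [fpart, dif_neg (by omega)]
      by_cases ht : t = 0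
      · rw [if_pos ht]
        subst ht
        refine ⟨Or.inl (by norm_num), ?_, rfl, by simp⟩
        rw [fpart, dif_neg (by omega), if_neg (by decide)]
      · have ht1 : t = 1 := by omega
        rw [if_neg ht]
        subst ht1
        refine ⟨Or.inl (by norm_num), ?_, rfl, by simp⟩
        rw [fpart, dif_neg (by omega), if_pos rfl]

def M0 {r : ℕ} (hr : 5 ≤ r) : (FGraph r).Subgraph where
  verts := {a | satp a}
  Adj a b := satp a ∧ b = fpart hr a ∧ a = fpart hr b
  adj_sub := by rintro a b ⟨ha, rfl, -⟩; exact (fpart_spec hr a ha).2.2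
  edge_vert := fun h => h.1
  symm := by
    constructor
    rintro a b ⟨ha, rfl, h2⟩
    exact ⟨(fpart_spec hr a ha).1, h2, rfl⟩

lemma M0_isMatching {r : ℕ} (hr : 5 ≤ r) : (M0 hr).IsMatching := by
  intro v hv
  refine ⟨fpart hr v, ⟨hv, rfl, ((fpart_spec hr v hv).2.1).symm⟩, ?_⟩
  rintro y ⟨-, rfl, -⟩
  rfl

lemma ck_cases : ∀ k : Fin 3, ck k = 0 ∨ ck k = 1 := by decide

def tsel {r : ℕ} (i : Fin r) : Fin 3 :=
  if h : (i : ℕ) < 3 then (if ck ⟨(i : ℕ), h⟩ = 0 then 1 else 0) else 0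

lemma tsel_ne2 {r : ℕ} (i : Fin r) : (tsel i : ℕ) ≠ 2 := by
  rw [tsel]
  split
  · split <;> simp
  · simp

def esel {r : ℕ} (hr : 5 ≤ r) : Fin 3 ⊕ Fin r → Sym2 (VV r)
  | .inl k => s(.inl k, fpart hr (.inl k))
  | .inr i => s(.inr (tsel i, i), fpart hr (.inr (tsel i, i)))

lemma fpart_tsel {r : ℕ} (hr : 5 ≤ r) (i : Fin r) :
    ∃ t', fpart hr (.inr (tsel i, i)) = .inr (t', i) := by
  by_cases h : (i : ℕ) < 3
  · refine ⟨other3 (ck ⟨(i : ℕ), h⟩) (tsel i), ?_⟩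
    rw [fpart, dif_pos h, if_neg ?_]
    rw [tsel, dif_pos h]
    rcases ck_cases ⟨(i : ℕ), h⟩ with hc | hc <;> rw [hc] <;> simp
  · refine ⟨1, ?_⟩
    rw [fpart, dif_neg h, if_pos (by rw [tsel, dif_neg h])]

lemma esel_mem {r : ℕ} (hr : 5 ≤ r) (x : Fin 3 ⊕ Fin r) : esel hr x ∈ (M0 hr).edgeSet := by
  rcases x with k | i
  · exact ⟨trivial, rfl, ((fpart_spec hr (.inl k) trivial).2.1).symm⟩
  · have hs : satp (.inr (tsel i, i) : VV r) := Or.inl (tsel_ne2 i)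
    exact ⟨hs, rfl, ((fpart_spec hr _ hs).2.1).symm⟩

lemma cls_esel {r : ℕ} (hr : 5 ≤ r) (x : Fin 3 ⊕ Fin r) : cls (esel hr x) = x := by
  rcases x with k | i
  · rfl
  · obtain ⟨t', ht'⟩ := fpart_tsel hr i
    show cls s(.inr (tsel i, i), fpart hr (.inr (tsel i, i))) = .inr i
    rw [ht', cls_mk]
    simp

lemma M0_card {r : ℕ} (hr : 5 ≤ r) : r + 3 ≤ (M0 hr).edgeSet.ncard := by
  have hinj : Function.Injective (esel hr) := by
    intro x y hxy
    rw [← cls_esel hr x, ← cls_esel hr y, hxy]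
  have hsub : Set.range (esel hr) ⊆ (M0 hr).edgeSet := by
    rintro e ⟨x, rfl⟩
    exact esel_mem hr x
  have h1 := Set.ncard_le_ncard hsub (Set.toFinite _)
  rw [← Set.image_univ, Set.ncard_image_of_injective _ hinj, Set.ncard_univ] at h1
  simp [Nat.card_eq_fintype_card] at h1
  omega

/-- `F_{2r}` has `3r + 3` vertices, has no perfect matching, and every maximum matching
saturates `x`, `y` and `z` and leaves exactly `r - 3` vertices unsaturated. -/
theorem stmt_13 (r : ℕ) (hr : 5 ≤ r) :
    Fintype.card (Fin 3 ⊕ Fin 3 × Fin r) = 3 * r + 3 ∧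
    (¬ ∃ M : (FGraph r).Subgraph, M.IsPerfectMatching) ∧
    (∀ M : (FGraph r).Subgraph, (FGraph r).IsMaximumMatching M →
      (∀ k : Fin 3, ∃ b, M.Adj (Sum.inl k) b) ∧
      {a : Fin 3 ⊕ Fin 3 × Fin r | ∀ b, ¬ M.Adj a b}.ncard = r - 3) := by
  refine ⟨?_, ?_, ?_⟩
  · simp only [Fintype.card_sum, Fintype.card_prod, Fintype.card_fin]
    ring
  · rintro ⟨M, hM, hsp⟩
    have h1 := matching_verts_ncard hM
    have h2 := edge_bound hM
    have hv : M.verts = Set.univ := Set.eq_univ_of_forall hsp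
    rw [hv, Set.ncard_univ, card_VV] at h1
    omega
  · rintro M ⟨hM, hmax⟩
    have hub := edge_bound hM
    have hlb : r + 3 ≤ M.edgeSet.ncard :=
      le_trans (M0_card hr) (hmax _ (M0_isMatching hr))
    constructor
    · intro k
      by_contra hun
      push_neg at hun
      have := edge_bound_unsat hM k hun
      omega
    · have h1 := matching_verts_ncard hM
      have hUc : {a : VV r | ∀ b, ¬ M.Adj a b} = M.vertsᶜ := by
        ext a
        simp only [mem_setOf_eq, mem_compl_iff]
        constructor
        · intro h hv
          obtain ⟨w, hw, -⟩ := hM hv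
          exact h w hw
        · intro h b hb
          exact h (M.edge_vert hb)
      have h2 := Set.ncard_add_ncard_compl M.verts
      rw [card_VV] at h2
      show ({a : VV r | ∀ b, ¬ M.Adj a b}).ncard = r - 3
      rw [hUc]
      omega
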